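/- Fix k ≥ 2 and let J_k be the (k+1)-uniform hypergraph with vertex set X_1×···×X_k (each X_i ≅ [n]) whose edges are the copies of some fixed special k-cluster D_k. Then α(J_k) ≤ k·n^{k-1}. -/

import Mathlib

/-- The family of special `k`-clusters, as `k`-uniform hypergraphs with vertices in `ℕ`,
together with a distinguished pair of disjoint edges `a, b`.
`𝒟₂` consists of the 3-edge paths; a member of `𝒟_k` is obtained from a member of
`𝒟_{k-1}` by adding new vertices `x, y`, enlarging every edge by `x`, and adding the
new edge `a ∪ {y}`; the new distinguished disjoint edges are `a ∪ {y}` and `b ∪ {x}`. -/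
inductive IsSpecialCluster : ℕ → Finset (Finset ℕ) → Finset ℕ → Finset ℕ → Prop
  | base (w x y z : ℕ) (hwx : w ≠ x) (hwy : w ≠ y) (hwz : w ≠ z)
      (hxy : x ≠ y) (hxz : x ≠ z) (hyz : y ≠ z) :
      IsSpecialCluster 2 {{w, x}, {x, y}, {y, z}} {w, x} {y, z}
  | step (k : ℕ) (D : Finset (Finset ℕ)) (a b : Finset ℕ) (x y : ℕ)
      (hD : IsSpecialCluster k D a b)
      (hx : ∀ e ∈ D, x ∉ e) (hy : ∀ e ∈ D, y ∉ e) (hxy : x ≠ y) :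
      IsSpecialCluster (k + 1) (insert (insert y a) (D.image (insert x ·)))
        (insert y a) (insert x b)

section helpers
variable {ι : Type} [DecidableEq ι] {n : ℕ} [NeZero n]

noncomputable def coordOf (e : Finset (ι × Fin n)) (i : ι) : Fin n :=
  if h : (e.filter fun v => v.1 = i).Nonempty then h.choose.2 else 0

lemma filter_eq_coordOf {e : Finset (ι × Fin n)} {i : ι}
    (h : (e.filter fun v => v.1 = i).card = 1) :
    e.filter (fun v => v.1 = i) = {(i, coordOf e i)} := by
  obtain ⟨v, hv⟩ := Finset.card_eq_one.mp h
  have hvm : v ∈ e.filter fun v => v.1 = i := by rw [hv]; exact Finset.mem_singleton_self v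
  have hv1 : v.1 = i := (Finset.mem_filter.mp hvm).2
  have hne : (e.filter fun v => v.1 = i).Nonempty := ⟨v, hvm⟩
  have hc : hne.choose ∈ e.filter fun v => v.1 = i := hne.choose_spec
  have hall : ∀ z ∈ e.filter (fun v => v.1 = i), z = v := by
    intro z hz; rw [hv] at hz; exact Finset.mem_singleton.mp hz
  have hc2 : hne.choose = v := hall _ hc
  have hch : coordOf e i = v.2 := by
    simp only [coordOf, dif_pos hne, hc2]
  have hiv : (i, coordOf e i) = v := by rw [hch, ← hv1]
  rw [hv, hiv]

lemma coordOf_mem {e : Finset (ι × Fin n)} {i : ι}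
    (h : (e.filter fun v => v.1 = i).card = 1) : (i, coordOf e i) ∈ e := by
  have := filter_eq_coordOf h
  have : (i, coordOf e i) ∈ e.filter fun v => v.1 = i := by rw [this]; simp
  exact (Finset.mem_filter.mp this).1

lemma ereco [Fintype ι] {e : Finset (ι × Fin n)}
    (h : ∀ i, (e.filter fun v => v.1 = i).card = 1) :
    e = Finset.univ.image (fun i => (i, coordOf e i)) := by
  ext v
  simp only [Finset.mem_image, Finset.mem_univ, true_and]
  constructor
  · intro hv
    refine ⟨v.1, ?_⟩
    have hv' : v ∈ e.filter (fun x => x.1 = v.1) := Finset.mem_filter.mpr ⟨hv, rfl⟩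
    rw [filter_eq_coordOf (h v.1), Finset.mem_singleton] at hv'
    exact hv'.symm
  · rintro ⟨i, rfl⟩
    exact coordOf_mem (h i)

end helpers

lemma IsSpecialCluster.a_mem {k D a b} (h : IsSpecialCluster k D a b) : a ∈ D := by
  cases h <;> simp

lemma IsSpecialCluster.two_le {k D a b} (h : IsSpecialCluster k D a b) : 2 ≤ k := by
  induction h <;> omega

section body
variable {ι : Type} [Fintype ι] [DecidableEq ι] {n : ℕ} [NeZero n]

/-- the part of an edge away from part `ℓ`, as a finset over the remaining parts -/
noncomputable def bodyOf (ℓ : ι) (e : Finset (ι × Fin n)) :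
    Finset ({i : ι // i ≠ ℓ} × Fin n) :=
  Finset.univ.image (fun j => (j, coordOf e j.val))

lemma bodyOf_filter (ℓ : ι) (e : Finset (ι × Fin n)) (i : {i : ι // i ≠ ℓ}) :
    (bodyOf ℓ e).filter (fun v => v.1 = i) = {(i, coordOf e i.val)} := by
  ext z
  simp only [bodyOf, Finset.mem_filter, Finset.mem_image, Finset.mem_univ, true_and,
    Finset.mem_singleton]
  constructor
  · rintro ⟨⟨j, rfl⟩, h2⟩
    simp only at h2
    subst h2; rfl
  · rintro rfl
    exact ⟨⟨i, rfl⟩, rfl⟩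

lemma univ_split (ℓ : ι) :
    (Finset.univ : Finset ι)
      = insert ℓ ((Finset.univ : Finset {i : ι // i ≠ ℓ}).image Subtype.val) := by
  ext i
  simp only [Finset.mem_univ, Finset.mem_insert, Finset.mem_image, true_and, true_iff]
  by_cases h : i = ℓ
  · exact Or.inl h
  · exact Or.inr ⟨⟨i, h⟩, rfl⟩

lemma reco2 {ℓ : ι} {e : Finset (ι × Fin n)}
    (h : ∀ i, (e.filter fun v => v.1 = i).card = 1) :
    e = insert (ℓ, coordOf e ℓ)
        ((bodyOf ℓ e).image (fun v => (v.1.val, v.2))) := by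
  conv_lhs => rw [ereco h]
  rw [univ_split ℓ, Finset.image_insert, Finset.image_image, bodyOf, Finset.image_image]
  rfl
end body

lemma H_empty_of_n_zero {ι : Type} [Fintype ι] [DecidableEq ι] (hpos : 0 < Fintype.card ι)
    (H : Finset (Finset (ι × Fin 0)))
    (htrans : ∀ e ∈ H, ∀ i : ι, (e.filter fun v => v.1 = i).card = 1) : H = ∅ := by
  obtain ⟨i⟩ := Fintype.card_pos_iff.mp hpos
  rw [Finset.eq_empty_iff_forall_notMem]
  intro e he
  have h1 := htrans e he i
  have h2 : e.filter (fun v => v.1 = i) = ∅ := by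
    rw [Finset.eq_empty_iff_forall_notMem]
    intro v _; exact (v.2).elim0
  rw [h2] at h1; simp at h1


set_option maxHeartbeats 1000000 in
theorem key : ∀ {k : ℕ} {D : Finset (Finset ℕ)} {a b : Finset ℕ},
    IsSpecialCluster k D a b →
    ∀ (ι : Type) [Fintype ι] [DecidableEq ι], Fintype.card ι = k →
    ∀ (n : ℕ) (H : Finset (Finset (ι × Fin n))),
      (∀ e ∈ H, ∀ i : ι, (e.filter fun v => v.1 = i).card = 1) →
      (¬ ∃ ψ : ℕ → ι × Fin n, Set.InjOn ψ ↑(D.sup id) ∧ ∀ e ∈ D, e.image ψ ∈ H) →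
      H.card ≤ k * n ^ (k - 1) := by
  intro k D a b hD
  induction hD with
  | base w x y z hwx hwy hwz hxy hxz hyz =>
    intro ι _ _ hcard n H htrans hfree
    classical
      rcases Nat.eq_zero_or_pos n with rfl | hn
      · rw [H_empty_of_n_zero (by omega) H htrans]; simp
      haveI : NeZero n := ⟨hn.ne'⟩
      have hu2 : (Finset.univ : Finset ι).card = 2 := by rw [Finset.card_univ, hcard]
      obtain ⟨i₀, i₁, hi01, huniv⟩ := Finset.card_eq_two.mp hu2
      set U : Finset (ι × Fin n) → Fin n := fun e => coordOf e i₀ with hU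
      set V : Finset (ι × Fin n) → Fin n := fun e => coordOf e i₁ with hV
      have hrec : ∀ e ∈ H, e = {(i₀, U e), (i₁, V e)} := by
        intro e he
        conv_lhs => rw [ereco (htrans e he), huniv]
        simp [Finset.image_insert, hU, hV]
      set F : Finset (ι × Fin n) → Fin n ⊕ Fin n := fun e =>
        if ∃ e' ∈ H, e' ≠ e ∧ U e' = U e then Sum.inr (V e) else Sum.inl (U e) with hF
      have hinj : Set.InjOn F ↑H := by
        intro e he e' he' hFe
        simp only [Finset.mem_coe] at he he'
        by_contra hne
        by_cases h1 : ∃ e'' ∈ H, e'' ≠ e ∧ U e'' = U e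
        · by_cases h2 : ∃ e'' ∈ H, e'' ≠ e' ∧ U e'' = U e'
          · rw [hF] at hFe
            simp only [if_pos h1, if_pos h2] at hFe
            have hVV : V e = V e' := Sum.inr.inj hFe
            have hUU : U e ≠ U e' := by
              intro h
              exact hne (by rw [hrec e he, hrec e' he', h, hVV])
            obtain ⟨e₃, he₃, hne₃, hU₃⟩ := h1
            have hV₃ : V e₃ ≠ V e := by
              intro h
              exact hne₃ (by rw [hrec e₃ he₃, hrec e he, hU₃, h])
            apply hfree
            set ψ : ℕ → ι × Fin n := fun m =>
              if m = w then (i₁, V e₃) else if m = x then (i₀, U e) else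
              if m = y then (i₁, V e) else (i₀, U e') with hψ
            have hψw : ψ w = (i₁, V e₃) := by simp [hψ]
            have hψx : ψ x = (i₀, U e) := by simp [hψ, hwx.symm]
            have hψy : ψ y = (i₁, V e) := by simp [hψ, hwy.symm, hxy.symm]
            have hψz : ψ z = (i₀, U e') := by simp [hψ, hwz.symm, hxz.symm, hyz.symm]
            refine ⟨ψ, ?_, ?_⟩
            · have hsub : (({{w,x},{x,y},{y,z}} : Finset (Finset ℕ))).sup id
                  ≤ ({w,x,y,z} : Finset ℕ) := by
                apply Finset.sup_le
                intro f hf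
                simp only [Finset.mem_insert, Finset.mem_singleton] at hf
                rcases hf with rfl | rfl | rfl <;> intro m hm <;>
                  simp only [id_eq, Finset.mem_insert, Finset.mem_singleton] at hm ⊢ <;> tauto
              apply Set.InjOn.mono (Finset.coe_subset.mpr hsub)
              intro m hm m' hm' hmm
              simp only [Finset.coe_insert, Set.mem_insert_iff, Finset.coe_singleton,
                Set.mem_singleton_iff] at hm hm'
              rcases hm with rfl | rfl | rfl | rfl <;> rcases hm' with rfl | rfl | rfl | rfl <;>
                simp only [hψw, hψx, hψy, hψz, Prod.mk.injEq] at hmm ⊢ <;>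
                first
                  | rfl
                  | exact absurd hmm.1 hi01
                  | exact absurd hmm.1 (Ne.symm hi01)
                  | exact absurd hmm.2 hV₃
                  | exact absurd hmm.2 (Ne.symm hV₃)
                  | exact absurd hmm.2 hUU
                  | exact absurd hmm.2 (Ne.symm hUU)
            · intro f hf
              have he₃eq : e₃ = {(i₀, U e), (i₁, V e₃)} := by
                conv_lhs => rw [hrec e₃ he₃]
                rw [hU₃]
              have he'eq : e' = {(i₀, U e'), (i₁, V e)} := by
                conv_lhs => rw [hrec e' he']
                rw [← hVV]
              simp only [Finset.mem_insert, Finset.mem_singleton] at hf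
              rcases hf with rfl | rfl | rfl
              · rw [Finset.image_insert, Finset.image_singleton, hψw, hψx, Finset.pair_comm,
                  ← he₃eq]
                exact he₃
              · rw [Finset.image_insert, Finset.image_singleton, hψx, hψy, ← hrec e he]
                exact he
              · rw [Finset.image_insert, Finset.image_singleton, hψy, hψz, Finset.pair_comm,
                  ← he'eq]
                exact he'
          · rw [hF] at hFe
            simp only [if_pos h1, if_neg h2] at hFe
            exact (Sum.inr_ne_inl hFe).elim
        · by_cases h2 : ∃ e'' ∈ H, e'' ≠ e' ∧ U e'' = U e'
          · rw [hF] at hFe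
            simp only [if_neg h1, if_pos h2] at hFe
            exact (Sum.inl_ne_inr hFe).elim
          · rw [hF] at hFe
            simp only [if_neg h1, if_neg h2] at hFe
            exact h1 ⟨e', he', fun h => hne h.symm, (Sum.inl.inj hFe).symm⟩
      have hle : H.card ≤ (Finset.univ : Finset (Fin n ⊕ Fin n)).card :=
        Finset.card_le_card_of_injOn F (fun _ _ => Finset.mem_univ _) hinj
      rw [Finset.card_univ, Fintype.card_sum, Fintype.card_fin] at hle
      simpa using by omega
  | step k D a b u ww hD hxu hyw huw ih =>
    intro ι _ _ hcard n H htrans hfree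
    classical
      have hk2 : 2 ≤ k := hD.two_le
      rcases Nat.eq_zero_or_pos n with rfl | hn
      · rw [H_empty_of_n_zero (by omega) H htrans]; simp
      haveI : NeZero n := ⟨hn.ne'⟩
      obtain ⟨ℓ⟩ : Nonempty ι := Fintype.card_pos_iff.mp (by omega)
      have hcard' : Fintype.card {i : ι // i ≠ ℓ} = k := by
        have h1 : Fintype.card {i : ι // ¬ i = ℓ} = Fintype.card ι - Fintype.card {i : ι // i = ℓ} :=
          Fintype.card_subtype_compl _
        have h2 : Fintype.card {i : ι // i = ℓ} = 1 := Fintype.card_subtype_eq ℓ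
        have : Fintype.card {i : ι // i ≠ ℓ} = Fintype.card {i : ι // ¬ i = ℓ} := rfl
        rw [this, h1, h2, hcard]
        omega
      set up : {i : ι // i ≠ ℓ} × Fin n → ι × Fin n := fun v => (v.1.val, v.2) with hup
      -- reconstruction
      have K1 : ∀ e ∈ H, e = insert (ℓ, coordOf e ℓ) ((bodyOf ℓ e).image up) :=
        fun e he => reco2 (htrans e he)
      have K2 : ∀ e ∈ H, ∀ e' ∈ H, bodyOf ℓ e = bodyOf ℓ e' →
          coordOf e ℓ = coordOf e' ℓ → e = e' := by
        intro e he e' he' hb hc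
        rw [K1 e he, K1 e' he', hb, hc]
      set isM : Finset (ι × Fin n) → Prop :=
        fun e => ∃ e' ∈ H, e' ≠ e ∧ bodyOf ℓ e' = bodyOf ℓ e with hisM
      set M : Finset (Finset (ι × Fin n)) := H.filter isM with hM
      set S : Finset (Finset (ι × Fin n)) := H.filter (fun e => ¬ isM e) with hS
      -- single edges
      have hScard : S.card ≤ n ^ k := by
        have hinj : Set.InjOn (fun e : Finset (ι × Fin n) => fun i : {i : ι // i ≠ ℓ} => coordOf e i.val) ↑S := by
          intro e he e' he' hq
          simp only [Finset.mem_coe, hS, Finset.mem_filter] at he he'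
          by_contra hne
          have hb : bodyOf ℓ e' = bodyOf ℓ e := by
            unfold bodyOf
            congr 1
            funext j
            exact congrArg (Prod.mk j) (congrFun hq j).symm
          exact he.2 ⟨e', he'.1, fun h => hne (h.symm), hb⟩
        have := Finset.card_le_card_of_injOn _ (fun _ _ => Finset.mem_univ _) hinj
        rwa [Finset.card_univ, Fintype.card_fun, Fintype.card_fin, hcard'] at this
      -- multi edges
      have hMfiber : ∀ p : Fin n, (M.filter (fun e => coordOf e ℓ = p)).card ≤ k * n ^ (k - 1) := by
        intro p
        set Mp := M.filter (fun e => coordOf e ℓ = p) with hMp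
        have hMpH : ∀ e ∈ Mp, e ∈ H ∧ isM e ∧ coordOf e ℓ = p := by
          intro e he
          simp only [hMp, hM, Finset.mem_filter] at he
          exact ⟨he.1.1, he.1.2, he.2⟩
        have hinj : Set.InjOn (bodyOf (n := n) ℓ) ↑Mp := by
          intro e he e' he' hb
          simp only [Finset.mem_coe] at he he'
          obtain ⟨heH, -, hep⟩ := hMpH e he
          obtain ⟨heH', -, hep'⟩ := hMpH e' he'
          exact K2 e heH e' heH' hb (by rw [hep, hep'])
        rw [← Finset.card_image_of_injOn hinj]
        set Lp := Mp.image (bodyOf ℓ) with hLp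
        apply ih _ hcard' n Lp
        · intro f hf i
          obtain ⟨e, he, rfl⟩ := Finset.mem_image.mp hf
          rw [bodyOf_filter]
          simp
        · rintro ⟨ψ, hinjψ, hedges⟩
          apply hfree
          obtain ⟨e₀, he₀, hbe₀⟩ := Finset.mem_image.mp (hedges a hD.a_mem)
          obtain ⟨he₀H, he₀M, he₀p⟩ := hMpH e₀ he₀
          obtain ⟨e₁, he₁H, hne₁, hb₁⟩ := he₀M
          have hqp : coordOf e₁ ℓ ≠ p := by
            intro h
            exact hne₁ (K2 e₁ he₁H e₀ he₀H hb₁ (by rw [h, he₀p]))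
          set Ψ : ℕ → ι × Fin n := fun m =>
            if m = u then (ℓ, p) else if m = ww then (ℓ, coordOf e₁ ℓ)
            else ((ψ m).1.val, (ψ m).2) with hΨ
          have hΨu : Ψ u = (ℓ, p) := by simp [hΨ]
          have hΨw : Ψ ww = (ℓ, coordOf e₁ ℓ) := by simp [hΨ, huw.symm]
          have husup : u ∉ D.sup id := by
            simp only [Finset.mem_sup, id_eq, not_exists, not_and]
            exact hxu
          have hwsup : ww ∉ D.sup id := by
            simp only [Finset.mem_sup, id_eq, not_exists, not_and]
            exact hyw
          have hΨm : ∀ m ∈ D.sup id, Ψ m = up (ψ m) := by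
            intro m hm
            have h1 : m ≠ u := fun h => husup (h ▸ hm)
            have h2 : m ≠ ww := fun h => hwsup (h ▸ hm)
            simp [hΨ, h1, h2, hup]
          have hsub : ((insert (insert ww a) (D.image (insert u ·)))).sup id
              ≤ insert u (insert ww (D.sup id)) := by
            apply Finset.sup_le
            intro f hf
            rcases Finset.mem_insert.mp hf with rfl | hf
            · intro m hm
              rcases Finset.mem_insert.mp hm with rfl | hm
              · simp
              · have : m ∈ D.sup id := Finset.le_sup (f := id) hD.a_mem hm
                simp [this]
            · obtain ⟨e, heD, rfl⟩ := Finset.mem_image.mp hf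
              intro m hm
              rcases Finset.mem_insert.mp hm with rfl | hm
              · simp
              · have : m ∈ D.sup id := Finset.le_sup (f := id) heD hm
                simp [this]
          refine ⟨Ψ, Set.InjOn.mono (Finset.coe_subset.mpr hsub) ?_, ?_⟩
          · intro m hm m' hm' hmm
            simp only [Finset.coe_insert, Set.mem_insert_iff, Finset.mem_coe] at hm hm'
            have key : ∀ m ∈ D.sup id, (Ψ m).1 ≠ ℓ := by
              intro m hm
              rw [hΨm m hm]
              exact (ψ m).1.2
            rcases hm with rfl | rfl | hm <;> rcases hm' with rfl | rfl | hm'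
            · rfl
            · rw [hΨu, hΨw] at hmm
              exact absurd (congrArg Prod.snd hmm) (Ne.symm hqp)
            · exact absurd (by rw [hΨu] at hmm; exact congrArg Prod.fst hmm.symm) (key m' hm')
            · rw [hΨu, hΨw] at hmm
              exact absurd (congrArg Prod.snd hmm) hqp
            · rfl
            · exact absurd (by rw [hΨw] at hmm; exact congrArg Prod.fst hmm.symm) (key m' hm')
            · exact absurd (by rw [hΨu] at hmm; exact congrArg Prod.fst hmm) (key m hm)
            · exact absurd (by rw [hΨw] at hmm; exact congrArg Prod.fst hmm) (key m hm)
            · rw [hΨm m hm, hΨm m' hm'] at hmm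
              have : ψ m = ψ m' := by
                have h1 := congrArg Prod.fst hmm
                have h2 := congrArg Prod.snd hmm
                simp only [hup] at h1 h2
                exact Prod.ext (Subtype.ext h1) h2
              exact hinjψ hm hm' this
          · intro f hf
            rcases Finset.mem_insert.mp hf with rfl | hf
            · rw [Finset.image_insert, hΨw]
              have haim : a.image Ψ = (a.image ψ).image up := by
                rw [Finset.image_image]
                apply Finset.image_congr
                intro m hm
                exact hΨm m (Finset.le_sup (f := id) hD.a_mem hm)
              rw [haim, ← hbe₀, ← hb₁, ← K1 e₁ he₁H]
              exact he₁H
            · obtain ⟨e, heD, rfl⟩ := Finset.mem_image.mp hf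
              rw [Finset.image_insert, hΨu]
              obtain ⟨e₂, he₂, hbe₂⟩ := Finset.mem_image.mp (hedges e heD)
              obtain ⟨he₂H, -, he₂p⟩ := hMpH e₂ he₂
              have heim : e.image Ψ = (e.image ψ).image up := by
                rw [Finset.image_image]
                apply Finset.image_congr
                intro m hm
                exact hΨm m (Finset.le_sup (f := id) heD hm)
              rw [heim, ← hbe₂, ← he₂p, ← K1 e₂ he₂H]
              exact he₂H
      -- put it together
      have hsplit : M.card + S.card = H.card := Finset.card_filter_add_card_filter_not _
      have hMcard : M.card ≤ n * (k * n ^ (k - 1)) := by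
        have h1 : M.card = ∑ p ∈ (Finset.univ : Finset (Fin n)), (M.filter (fun e => coordOf e ℓ = p)).card :=
          Finset.card_eq_sum_card_fiberwise (fun e _ => Finset.mem_univ _)
        rw [h1]
        calc ∑ p ∈ (Finset.univ : Finset (Fin n)), (M.filter (fun e => coordOf e ℓ = p)).card
            ≤ (Finset.univ : Finset (Fin n)).card • (k * n ^ (k - 1)) :=
              Finset.sum_le_card_nsmul _ _ _ (fun p _ => hMfiber p)
          _ = n * (k * n ^ (k - 1)) := by rw [Finset.card_univ, Fintype.card_fin, smul_eq_mul]
      have hpow : n ^ (k - 1) * n = n ^ k := by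
        rw [← pow_succ]
        congr 1
        omega
      have hkey : n * (k * n ^ (k - 1)) = k * n ^ k := by rw [← hpow]; ring
      have hgoal : k + 1 - 1 = k := by omega
      rw [hgoal]
      have : (k + 1) * n ^ k = k * n ^ k + n ^ k := by ring
      omega

/-- Every `k`-partite `k`-uniform hypergraph with parts of size `n` (vertices
`Fin k × Fin n`, each edge a transversal) containing no copy of the special
`k`-cluster `D_k` has at most `k·n^(k-1)` edges. -/
theorem stmt15 (k : ℕ) (hk : 2 ≤ k) (D : Finset (Finset ℕ)) (a b : Finset ℕ)
    (hD : IsSpecialCluster k D a b) (n : ℕ) (H : Finset (Finset (Fin k × Fin n)))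
    (htrans : ∀ e ∈ H, ∀ i : Fin k, (e.filter fun v => v.1 = i).card = 1)
    (hfree : ¬ ∃ ψ : ℕ → Fin k × Fin n, Set.InjOn ψ ↑(D.sup id) ∧
      ∀ e ∈ D, e.image ψ ∈ H) :
    H.card ≤ k * n ^ (k - 1) := by
  exact key hD (Fin k) (Fintype.card_fin k) n H htrans hfree
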